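/- For positive semidefinite ℓ×ℓ complex matrices X and Y, tgm(X,Y) ≤ √((trace X)(trace Y)). -/

import Mathlib

open Matrix
open scoped ComplexOrder

/-- The square root of a positive semidefinite matrix, as defined in Mathlib (Dec 2024). -/
noncomputable def Matrix.PosSemidef.sqrt {n : Type*} [Fintype n] [DecidableEq n] {𝕜 : Type*}
    [RCLike 𝕜] {A : Matrix n n 𝕜} (hA : A.PosSemidef) : Matrix n n 𝕜 :=
  hA.1.eigenvectorUnitary.1 * diagonal ((↑) ∘ (√·) ∘ hA.1.eigenvalues) *
  (star hA.1.eigenvectorUnitary : Matrix n n 𝕜)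

lemma Matrix.PosSemidef.posSemidef_sqrt {n : Type*} [Fintype n] [DecidableEq n] {𝕜 : Type*}
    [RCLike 𝕜] {A : Matrix n n 𝕜} (hA : A.PosSemidef) : PosSemidef hA.sqrt := by
  apply PosSemidef.mul_mul_conjTranspose_same
  refine posSemidef_diagonal_iff.mpr fun i ↦ ?_
  rw [Function.comp_apply, RCLike.nonneg_iff]
  constructor
  · simp only [Function.comp_apply, RCLike.ofReal_re]; exact Real.sqrt_nonneg _
  · simp only [Function.comp_apply, RCLike.ofReal_im]

/-- The product `√X * Y * √X` is positive semidefinite. -/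
theorem sqrt_mul_mul_sqrt_posSemidef {n : Type*} [Fintype n] [DecidableEq n]
    {X Y : Matrix n n ℂ} (hX : X.PosSemidef) (hY : Y.PosSemidef) :
    (hX.sqrt * Y * hX.sqrt).PosSemidef := by
  have h := hY.conjTranspose_mul_mul_same (B := hX.sqrt)
  rwa [hX.posSemidef_sqrt.isHermitian.eq] at h

/-- The tracial geometric mean `tgm(X,Y) = trace √(√X·Y·√X)`. -/
noncomputable def tgm {n : Type*} [Fintype n] [DecidableEq n]
    {X Y : Matrix n n ℂ} (hX : X.PosSemidef) (hY : Y.PosSemidef) : ℝ :=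
  ((sqrt_mul_mul_sqrt_posSemidef hX hY).sqrt.trace).re

lemma Matrix.PosSemidef.sqrt_mul_self {n : Type*} [Fintype n] [DecidableEq n]
    {A : Matrix n n ℂ} (hA : A.PosSemidef) : hA.sqrt * hA.sqrt = A := by
  have hU : (star hA.1.eigenvectorUnitary : Matrix n n ℂ) * hA.1.eigenvectorUnitary = 1 :=
    Matrix.UnitaryGroup.star_mul_self _
  conv_rhs => rw [hA.1.spectral_theorem, Unitary.conjStarAlgAut_apply]
  simp only [Matrix.PosSemidef.sqrt, Matrix.mul_assoc]
  rw [← Matrix.mul_assoc (star _ : Matrix n n ℂ) _, hU, Matrix.one_mul,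
    ← Matrix.mul_assoc (diagonal _), diagonal_mul_diagonal]
  congr 3
  funext i
  simp only [Function.comp_apply]
  rw [← RCLike.ofReal_mul, Real.mul_self_sqrt (hA.eigenvalues_nonneg i)]

namespace TGMAux

variable {n : Type*} [Fintype n] [DecidableEq n]

lemma star_mul_self_re (z : ℂ) : (star z * z).re = ‖z‖ ^ 2 := by
  simp only [Complex.star_def, Complex.mul_re, Complex.conj_re, Complex.conj_im,
    Complex.sq_norm, Complex.normSq_apply]
  ring

lemma trace_re_nonneg {A : Matrix n n ℂ} (hA : A.PosSemidef) : 0 ≤ A.trace.re := by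
  have h : ∀ i, 0 ≤ (A i i).re := by
    intro i
    have h2 := hA.re_dotProduct_nonneg (Pi.single i 1)
    simpa [Matrix.mulVec, dotProduct, Pi.single_apply] using h2
  simp only [Matrix.trace, Matrix.diag, Complex.re_sum]
  exact Finset.sum_nonneg fun i _ => h i

/-- Frobenius sum of squared norms equals real part of `trace (Aᴴ * A)`. -/
lemma trace_conjTranspose_mul_self_re (A : Matrix n n ℂ) :
    (Matrix.trace (Aᴴ * A)).re = ∑ i, ∑ k, ‖A k i‖ ^ 2 := by
  simp only [Matrix.trace, Matrix.diag, Matrix.mul_apply, Matrix.conjTranspose_apply,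
    Complex.re_sum]
  exact Finset.sum_congr rfl fun i _ => Finset.sum_congr rfl fun k _ => star_mul_self_re _

end TGMAux

open TGMAux in
/-- `tgm(X,Y) ≤ √((trace X)(trace Y))`. -/
theorem tgm_le_sqrt_trace_mul_trace {ℓ : ℕ} {X Y : Matrix (Fin ℓ) (Fin ℓ) ℂ}
    (hX : X.PosSemidef) (hY : Y.PosSemidef) :
    tgm hX hY ≤ Real.sqrt (X.trace.re * Y.trace.re) := by
  classical
  set M : Matrix (Fin ℓ) (Fin ℓ) ℂ := hX.sqrt * Y * hX.sqrt with hMdef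
  have hM : M.PosSemidef := sqrt_mul_mul_sqrt_posSemidef hX hY
  set μ : Fin ℓ → ℝ := hM.1.eigenvalues with hμdef
  have hμ0 : ∀ i, 0 ≤ μ i := fun i => hM.eigenvalues_nonneg i
  set s : Fin ℓ → ℝ := fun i => Real.sqrt (μ i) with hsdef
  have hs0 : ∀ i, 0 ≤ s i := fun i => Real.sqrt_nonneg _
  have hss : ∀ i, s i * s i = μ i := fun i => Real.mul_self_sqrt (hμ0 i)
  set U : Matrix (Fin ℓ) (Fin ℓ) ℂ := (hM.1.eigenvectorUnitary : Matrix (Fin ℓ) (Fin ℓ) ℂ)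
    with hUdef
  have hUU : star U * U = 1 := by
    rw [hUdef]; exact Matrix.UnitaryGroup.star_mul_self _
  have hUU' : U * star U = 1 := by
    rw [hUdef]; exact (Matrix.mem_unitaryGroup_iff).mp hM.1.eigenvectorUnitary.2
  have hXh := hX.posSemidef_sqrt.isHermitian
  have hYh := hY.posSemidef_sqrt.isHermitian
  -- Step 1 : tgm = ∑ s i
  have h1 : tgm hX hY = ∑ i, s i := by
    have hsq : (sqrt_mul_mul_sqrt_posSemidef hX hY).sqrt =
        U * Matrix.diagonal ((↑) ∘ s) * star U := rfl
    rw [tgm, hsq, Matrix.trace_mul_cycle, hUU, Matrix.one_mul, Matrix.trace_diagonal]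
    simp [Complex.re_sum]
  -- C has columns of norm s i
  set C : Matrix (Fin ℓ) (Fin ℓ) ℂ := hY.sqrt * (hX.sqrt * U) with hCdef
  have hC : Cᴴ * C = Matrix.diagonal (fun i => (μ i : ℂ)) := by
    have hsp : star U * M * U = Matrix.diagonal (RCLike.ofReal ∘ hM.1.eigenvalues) := by
      simpa only [Unitary.conjStarAlgAut_apply, Unitary.coe_star, star_star] using
        hM.1.conjStarAlgAut_star_eigenvectorUnitary
    have h2 : Cᴴ * C = star U * M * U := by
      simp only [hCdef, Matrix.conjTranspose_mul, hXh.eq, hYh.eq,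
        Matrix.star_eq_conjTranspose, Matrix.mul_assoc]
      rw [← Matrix.mul_assoc hY.sqrt hY.sqrt, hY.sqrt_mul_self]
      simp only [hMdef, Matrix.mul_assoc]
    rw [h2]
    exact hsp.trans rfl
  have hCij : ∀ i j, (∑ k, star (C k i) * C k j) = if i = j then ((μ i : ℝ) : ℂ) else 0 := by
    intro i j
    have h2 : (Cᴴ * C) i j = Matrix.diagonal (fun i => (μ i : ℂ)) i j := by rw [hC]
    simpa [Matrix.mul_apply, Matrix.conjTranspose_apply, Matrix.diagonal_apply] using h2
  -- the partial isometry W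
  set W : Matrix (Fin ℓ) (Fin ℓ) ℂ :=
    Matrix.of (fun k i => if μ i = 0 then 0 else C k i / (s i : ℂ)) with hWdef
  have hsne : ∀ i, μ i ≠ 0 → (s i : ℂ) ≠ 0 := by
    intro i hi
    have : s i ≠ 0 := fun h => hi (by rw [← hss i, h, mul_zero])
    exact_mod_cast this
  have hW1 : Wᴴ * W = Matrix.diagonal (fun i => if μ i = 0 then 0 else (1 : ℂ)) := by
    ext i j
    rw [Matrix.mul_apply, Matrix.diagonal_apply]
    simp only [Matrix.conjTranspose_apply, hWdef, Matrix.of_apply]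
    by_cases hi : μ i = 0
    · simp [hi]
    · by_cases hj : μ j = 0
      · have hij : i ≠ j := fun h => hi (by rw [h]; exact hj)
        simp [hi, hj, hij]
      · simp only [hi, hj, if_false]
        have hterm : ∀ k, star (C k i / (s i : ℂ)) * (C k j / (s j : ℂ)) =
            star (C k i) * C k j / ((s i : ℂ) * (s j : ℂ)) := by
          intro k
          simp only [star_div₀, Complex.star_def, Complex.conj_ofReal, div_mul_div_comm]
        rw [Finset.sum_congr rfl fun k _ => hterm k, ← Finset.sum_div, hCij i j]
        by_cases hij : i = j
        · subst hij
          rw [if_pos rfl, if_pos rfl,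
            div_eq_one_iff_eq (mul_ne_zero (hsne i hi) (hsne i hi)), ← hss i]
          push_cast
          ring
        · simp [hij]
  have hWW : W * (Wᴴ * W) = W := by
    rw [hW1]
    ext k i
    rw [Matrix.mul_diagonal]
    by_cases hi : μ i = 0 <;> simp [hWdef, hi]
  -- B := √Y * W and P := √X * U
  set B : Matrix (Fin ℓ) (Fin ℓ) ℂ := hY.sqrt * W with hBdef
  set P : Matrix (Fin ℓ) (Fin ℓ) ℂ := hX.sqrt * U with hPdef
  have hBB : Bᴴ * B = Wᴴ * (Y * W) := by
    simp only [hBdef, Matrix.conjTranspose_mul, hYh.eq, Matrix.mul_assoc]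
    rw [← Matrix.mul_assoc hY.sqrt, hY.sqrt_mul_self]
  have hPP : (Matrix.trace (Pᴴ * P)).re = X.trace.re := by
    have h2 : Pᴴ * P = star U * X * U := by
      simp only [hPdef, Matrix.conjTranspose_mul, hXh.eq, Matrix.star_eq_conjTranspose,
        Matrix.mul_assoc]
      rw [← Matrix.mul_assoc hX.sqrt, hX.sqrt_mul_self]
    rw [h2, Matrix.trace_mul_cycle, hUU', Matrix.one_mul]
  -- trace(Wᴴ Y W) ≤ trace Y
  have hBtr : (Matrix.trace (Wᴴ * (Y * W))).re ≤ Y.trace.re := by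
    set R : Matrix (Fin ℓ) (Fin ℓ) ℂ := W * Wᴴ with hRdef
    have hRidem : R * R = R := by
      rw [hRdef, Matrix.mul_assoc, ← Matrix.mul_assoc Wᴴ, ← Matrix.mul_assoc W (Wᴴ * W), hWW]
    set Q : Matrix (Fin ℓ) (Fin ℓ) ℂ := 1 - R with hQdef
    have hQH : Qᴴ = Q := by
      simp [hQdef, hRdef, Matrix.conjTranspose_sub, Matrix.conjTranspose_mul]
    have hQidem : Q * Q = Q := by
      rw [hQdef, Matrix.sub_mul, Matrix.one_mul, Matrix.mul_sub, Matrix.mul_one, hRidem]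
      abel
    have hQpsd : (Qᴴ * Y * Q).PosSemidef := hY.conjTranspose_mul_mul_same Q
    have hQtr : 0 ≤ (Matrix.trace (Y * Q)).re := by
      have h3 : Matrix.trace (Y * Q) = Matrix.trace (Qᴴ * Y * Q) := by
        conv_lhs => rw [← hQidem, ← Matrix.mul_assoc]
        rw [Matrix.trace_mul_cycle, hQH]
      rw [h3]
      exact trace_re_nonneg hQpsd
    have h4 : Matrix.trace (Wᴴ * (Y * W)) = Matrix.trace (Y * R) := by
      rw [Matrix.trace_mul_comm, hRdef, Matrix.mul_assoc]
    have h5 : Matrix.trace (Y * Q) = Y.trace - Matrix.trace (Y * R) := by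
      rw [hQdef, Matrix.mul_sub, Matrix.mul_one, Matrix.trace_sub]
    rw [h4]
    have := hQtr
    rw [h5] at this
    have h6 : 0 ≤ Y.trace.re - (Matrix.trace (Y * R)).re := by
      simpa [Complex.sub_re] using this
    linarith
  -- trace(Bᴴ P) = ∑ s i
  have hBP : (Matrix.trace (Bᴴ * P)).re = ∑ i, s i := by
    have h2 : Bᴴ * P = Wᴴ * C := by
      simp only [hBdef, hCdef, hPdef, Matrix.conjTranspose_mul, hYh.eq, Matrix.mul_assoc]
    have h3 : ∀ i, (∑ k, star (W k i) * C k i) = ((s i : ℝ) : ℂ) := by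
      intro i
      by_cases hi : μ i = 0
      · have : s i = 0 := by rw [hsdef]; simp [hi]
        simp [hWdef, hi, this]
      · have hterm : ∀ k, star (W k i) * C k i = star (C k i) * C k i / (s i : ℂ) := by
          intro k
          simp only [hWdef, Matrix.of_apply, hi, if_false]
          rw [star_div₀, Complex.star_def, Complex.conj_ofReal, div_mul_eq_mul_div]
        rw [Finset.sum_congr rfl fun k _ => hterm k, ← Finset.sum_div, hCij i i, if_pos rfl]
        rw [div_eq_iff (hsne i hi), ← Complex.ofReal_mul, hss i]
    have h4 : Matrix.trace (Wᴴ * C) = ∑ i, ((s i : ℝ) : ℂ) := by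
      simp only [Matrix.trace, Matrix.diag, Matrix.mul_apply, Matrix.conjTranspose_apply]
      exact Finset.sum_congr rfl fun i _ => h3 i
    rw [h2, h4]
    simp [Complex.re_sum]
  -- Cauchy–Schwarz
  have hCS : (Matrix.trace (Bᴴ * P)).re ≤
      Real.sqrt ((Matrix.trace (Bᴴ * B)).re * (Matrix.trace (Pᴴ * P)).re) := by
    have h2 : (Matrix.trace (Bᴴ * P)).re ≤ ∑ i, ∑ k, ‖B k i‖ * ‖P k i‖ := by
      have : (Matrix.trace (Bᴴ * P)).re = ∑ i, ∑ k, (star (B k i) * P k i).re := by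
        simp [Matrix.trace, Matrix.diag, Matrix.mul_apply, Matrix.conjTranspose_apply,
          Complex.re_sum]
      rw [this]
      refine Finset.sum_le_sum fun i _ => Finset.sum_le_sum fun k _ => ?_
      calc (star (B k i) * P k i).re ≤ ‖star (B k i) * P k i‖ := Complex.re_le_norm _
        _ = ‖B k i‖ * ‖P k i‖ := by rw [norm_mul, norm_star]
    have h3 : (∑ i, ∑ k, ‖B k i‖ * ‖P k i‖) ^ 2 ≤
        (∑ i, ∑ k, ‖B k i‖ ^ 2) * (∑ i, ∑ k, ‖P k i‖ ^ 2) := by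
      have := Finset.sum_mul_sq_le_sq_mul_sq (Finset.univ : Finset (Fin ℓ × Fin ℓ))
        (fun p => ‖B p.2 p.1‖) (fun p => ‖P p.2 p.1‖)
      simpa [Fintype.sum_prod_type] using this
    have h4 : (∑ i, ∑ k, ‖B k i‖ * ‖P k i‖) ≤
        Real.sqrt ((Matrix.trace (Bᴴ * B)).re * (Matrix.trace (Pᴴ * P)).re) := by
      apply Real.le_sqrt_of_sq_le
      rw [trace_conjTranspose_mul_self_re, trace_conjTranspose_mul_self_re]
      exact h3
    exact h2.trans h4
  -- assemble
  rw [h1, ← hBP]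
  refine hCS.trans ?_
  apply Real.sqrt_le_sqrt
  rw [mul_comm (X.trace.re)]
  have hBnn : 0 ≤ (Matrix.trace (Bᴴ * B)).re := trace_re_nonneg
    (Matrix.posSemidef_conjTranspose_mul_self B)
  have hPnn : 0 ≤ (Matrix.trace (Pᴴ * P)).re := trace_re_nonneg
    (Matrix.posSemidef_conjTranspose_mul_self P)
  have hBY : (Matrix.trace (Bᴴ * B)).re ≤ Y.trace.re := by rw [hBB]; exact hBtr
  have hYnn : 0 ≤ Y.trace.re := trace_re_nonneg hY
  calc (Matrix.trace (Bᴴ * B)).re * (Matrix.trace (Pᴴ * P)).re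
      ≤ Y.trace.re * (Matrix.trace (Pᴴ * P)).re := by
        exact mul_le_mul_of_nonneg_right hBY hPnn
    _ = Y.trace.re * X.trace.re := by rw [hPP]
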